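/- Let d ≥ 1, let μ = (μ₁ ≥ … ≥ μ_l) be a partition of n−d, let α = (d, μ₁, …, μ_l), and let β be the nonincreasing rearrangement of α. Then n² − ∑_j ((βᵗ)_j)² ≥ [(n−d)² − ∑_j ((μᵗ)_j)²] + (2n−d)(d−1), and equality holds if and only if α is a partition, i.e. if and only if d ≥ μ₁. Equivalently, dim 𝒪_{(d,μ)} ≥ dim 𝒪_μ + (2n−d)(d−1) with equality iff (d,μ) is a partition, where dim 𝒪_λ = n² − ∑_j ((λᵗ)_j)² for a partition λ of n. -/

import Mathlib

/-- The `j`-th part of the transpose (conjugate) partition of (the nonincreasing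
rearrangement of) a composition `l`: `#{i : lᵢ ≥ j}` (invariant under rearrangement). -/
def conjPart (l : List ℕ) (j : ℕ) : ℕ := (l.filter (fun a => decide (j ≤ a))).length

lemma conjPart_cons (a : ℕ) (l : List ℕ) (j : ℕ) :
    conjPart (a :: l) j = (if j ≤ a then 1 else 0) + conjPart l j := by
  simp only [conjPart, List.filter_cons]
  split_ifs with h <;> simp_all [Nat.add_comm]

lemma conjPart_eq_zero (l : List ℕ) (j : ℕ) (h : ∀ a ∈ l, a < j) :
    conjPart l j = 0 := by
  simp only [conjPart, List.length_eq_zero_iff, List.filter_eq_nil_iff]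
  intro a ha
  simpa using Nat.not_le.mpr (h a ha)

lemma one_le_conjPart (l : List ℕ) (j a : ℕ) (ha : a ∈ l) (hj : j ≤ a) :
    1 ≤ conjPart l j :=
  List.length_pos_iff.mpr (List.ne_nil_of_mem (List.mem_filter.mpr ⟨ha, by simpa using hj⟩))

lemma sum_conjPart (l : List ℕ) (n : ℕ) (h : ∀ a ∈ l, a ≤ n) :
    ∑ j ∈ Finset.Icc 1 n, conjPart l j = l.sum := by
  induction l with
  | nil => simp [conjPart]
  | cons a t ih =>
    have ha : a ≤ n := h a (by simp)
    have ih' := ih (fun x hx => h x (by simp [hx]))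
    simp only [conjPart_cons, Finset.sum_add_distrib, ih', List.sum_cons]
    congr 1
    rw [Finset.sum_ite, Finset.sum_const, Finset.sum_const]
    have hf : (Finset.Icc 1 n).filter (fun j => j ≤ a) = Finset.Icc 1 a := by
      ext j; simp only [Finset.mem_filter, Finset.mem_Icc]; omega
    rw [hf, Nat.card_Icc]
    simp

lemma headD_le_iff (μ : List ℕ) (hsort : μ.Pairwise (· ≥ ·)) (d : ℕ) :
    μ.headD 0 ≤ d ↔ ∀ a ∈ μ, a ≤ d := by
  cases μ with
  | nil => simp
  | cons x t =>
    rw [List.pairwise_cons] at hsort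
    simp only [List.headD_cons, List.mem_cons]
    constructor
    · rintro h a (rfl | ha)
      · exact h
      · exact le_trans (hsort.1 a ha) h
    · intro h; exact h x (Or.inl rfl)

theorem stmt_6 (n d : ℕ) (hd : 1 ≤ d) (hdn : d ≤ n) (μ : List ℕ)
    (hpos : ∀ x ∈ μ, 0 < x) (hsort : μ.Pairwise (· ≥ ·)) (hsum : μ.sum = n - d) :
    ((n : ℤ) ^ 2 - ∑ j ∈ Finset.Icc 1 n, (conjPart (d :: μ) j : ℤ) ^ 2
        ≥ ((n - d : ℕ) : ℤ) ^ 2 - ∑ j ∈ Finset.Icc 1 n, (conjPart μ j : ℤ) ^ 2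
          + (2 * (n : ℤ) - d) * ((d : ℤ) - 1))
    ∧ ((n : ℤ) ^ 2 - ∑ j ∈ Finset.Icc 1 n, (conjPart (d :: μ) j : ℤ) ^ 2
        = ((n - d : ℕ) : ℤ) ^ 2 - ∑ j ∈ Finset.Icc 1 n, (conjPart μ j : ℤ) ^ 2
          + (2 * (n : ℤ) - d) * ((d : ℤ) - 1)
      ↔ μ.headD 0 ≤ d) := by
  have hle : ∀ a ∈ μ, a ≤ n := by
    intro a ha
    have h1 : a ≤ μ.sum := List.single_le_sum (fun x _ => Nat.zero_le x) a ha
    omega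
  have hIcc : Finset.Icc 1 n = Finset.Ioc 0 n := by rw [← Finset.Icc_add_one_left_eq_Ioc]; rfl
  set c : ℕ → ℤ := fun j => (conjPart μ j : ℤ) with hc
  set T : ℤ := ∑ j ∈ Finset.Ioc 0 d, c j with hT
  set U : ℤ := ∑ j ∈ Finset.Ioc d n, c j with hU
  have hUnn : 0 ≤ U := Finset.sum_nonneg (fun j _ => Int.ofNat_nonneg _)
  have hTU : T + U = (n : ℤ) - d := by
    rw [hT, hU, Finset.sum_Ioc_consecutive c (Nat.zero_le d) hdn, ← hIcc]
    have hnat : ∑ j ∈ Finset.Icc 1 n, conjPart μ j = n - d := by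
      rw [sum_conjPart μ n hle, hsum]
    have : (↑(∑ j ∈ Finset.Icc 1 n, conjPart μ j) : ℤ) = ((n - d : ℕ) : ℤ) :=
      congrArg (Nat.cast : ℕ → ℤ) hnat
    push_cast [Nat.cast_sub hdn] at this
    simpa [hc] using this
  have key : ∑ j ∈ Finset.Icc 1 n, (conjPart (d :: μ) j : ℤ) ^ 2
      = ∑ j ∈ Finset.Icc 1 n, (c j) ^ 2 + 2 * T + d := by
    rw [hIcc, ← Finset.sum_Ioc_consecutive (fun j => (conjPart (d :: μ) j : ℤ) ^ 2)
        (Nat.zero_le d) hdn,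
      ← Finset.sum_Ioc_consecutive (fun j => (c j) ^ 2) (Nat.zero_le d) hdn]
    have h1 : ∑ j ∈ Finset.Ioc 0 d, (conjPart (d :: μ) j : ℤ) ^ 2
        = ∑ j ∈ Finset.Ioc 0 d, ((c j) ^ 2 + 2 * c j + 1) := by
      apply Finset.sum_congr rfl
      intro j hj
      rw [Finset.mem_Ioc] at hj
      rw [conjPart_cons, if_pos hj.2]
      push_cast
      ring
    have h2 : ∑ j ∈ Finset.Ioc d n, (conjPart (d :: μ) j : ℤ) ^ 2
        = ∑ j ∈ Finset.Ioc d n, (c j) ^ 2 := by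
      apply Finset.sum_congr rfl
      intro j hj
      rw [Finset.mem_Ioc] at hj
      rw [conjPart_cons, if_neg (by omega)]
      simp [hc]
    rw [h1, h2]
    rw [Finset.sum_add_distrib, Finset.sum_add_distrib, Finset.sum_const, Nat.card_Ioc,
      ← Finset.mul_sum]
    simp only [Nat.sub_zero, nsmul_eq_mul, mul_one]
    ring
  have hUiff : U = 0 ↔ μ.headD 0 ≤ d := by
    rw [headD_le_iff μ hsort d]
    constructor
    · intro hU0
      intro a ha
      by_contra hx
      push_neg at hx
      have ha1 : a ≤ n - d := hsum ▸ List.single_le_sum (fun x _ => Nat.zero_le x) a ha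
      have hdn' : d + 1 ≤ n := by omega
      have hmem : d + 1 ∈ Finset.Ioc d n := by
        simp only [Finset.mem_Ioc]; omega
      have h1 : 1 ≤ c (d + 1) := by
        have := one_le_conjPart μ (d + 1) a ha (by omega)
        simp only [hc]
        exact_mod_cast this
      have := Finset.single_le_sum (f := c) (fun j _ => Int.ofNat_nonneg _) hmem
      rw [← hU] at this
      omega
    · intro hall
      rw [hU]
      apply Finset.sum_eq_zero
      intro j hj
      rw [Finset.mem_Ioc] at hj
      simp only [hc]
      rw [conjPart_eq_zero μ j (fun a ha => lt_of_le_of_lt (hall a ha) hj.1)]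
      rfl
  have hcast : ((n - d : ℕ) : ℤ) = (n : ℤ) - d := by
    push_cast [Nat.cast_sub hdn]; ring
  have hring : (n : ℤ) ^ 2 - (((n : ℤ) - d) ^ 2 + (2 * (n : ℤ) - d) * ((d : ℤ) - 1))
      = 2 * ((n : ℤ) - d) + d := by ring
  rw [key, hcast]
  constructor
  · linarith
  · constructor
    · intro h; exact hUiff.mp (by linarith)
    · intro h; have := hUiff.mpr h; linarith
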